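/- Let G = (V', E) be a finite simple undirected graph and let p be a new vertex not in V' ∪ E. Construct a directed graph D on vertex set V' ∪ E ∪ {p} as follows: given a subset I ⊆ V', for each v ∈ I add arcs from every edge e ∈ E incident to v into v, and an arc from p into v. Then the underlying undirected graph of D is acyclic if and only if I is an independent set of G. -/

import Mathlib

def ptSkeleton {V : Type*} (G : SimpleGraph V) (I : Set V) :
    SimpleGraph (V ⊕ (G.edgeSet ⊕ Unit)) :=
  SimpleGraph.fromRel (fun a b =>
    match a, b with
    | Sum.inr (Sum.inl e), Sum.inl v => v ∈ I ∧ v ∈ (e : Sym2 V)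
    | Sum.inr (Sum.inr _), Sum.inl v => v ∈ I
    | _, _ => False)

open SimpleGraph Walk in
lemma exists_two_nbrs {V : Type*} {G : SimpleGraph V} {a : V} {c : G.Walk a a}
    (hc : c.IsCycle) :
    ∃ b t, b ∈ c.support ∧ t ∈ c.support ∧ G.Adj a b ∧ G.Adj a t ∧ b ≠ t := by
  cases c with
  | nil => exact absurd hc Walk.IsCycle.not_of_nil
  | @cons _ b _ h q =>
    rw [Walk.cons_isCycle_iff] at hc
    obtain ⟨hq, he⟩ := hc
    obtain ⟨t, h', q', hrq⟩ := Walk.exists_eq_cons_of_ne h.ne q.reverse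
    refine ⟨b, t, ?_, ?_, h, h', ?_⟩
    · simp
    · have : t ∈ q.reverse.support := by rw [hrq]; simp
      rw [Walk.support_reverse, List.mem_reverse] at this
      simp [this]
    · rintro rfl
      apply he
      have : s(a, b) ∈ q.reverse.edges := by rw [hrq]; simp [Sym2.eq_swap]
      rwa [Walk.edges_reverse, List.mem_reverse] at this

lemma nbr_of_inl {V : Type*} {G : SimpleGraph V} {I : Set V} {v : V}
    {b : V ⊕ (G.edgeSet ⊕ Unit)} (h : (ptSkeleton G I).Adj (Sum.inl v) b) :
    v ∈ I ∧ (b = Sum.inr (Sum.inr ()) ∨ ∃ e, b = Sum.inr (Sum.inl e) ∧ v ∈ (e : Sym2 V)) := by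
  rw [ptSkeleton, SimpleGraph.fromRel_adj] at h
  rcases b with v' | e' | u' <;> simp_all

lemma nbr_of_edge {V : Type*} {G : SimpleGraph V} {I : Set V} {e : G.edgeSet}
    {b : V ⊕ (G.edgeSet ⊕ Unit)} (h : (ptSkeleton G I).Adj (Sum.inr (Sum.inl e)) b) :
    ∃ v, b = Sum.inl v ∧ v ∈ I ∧ v ∈ (e : Sym2 V) := by
  rw [ptSkeleton, SimpleGraph.fromRel_adj] at h
  rcases b with v' | e' | u' <;> simp_all

lemma nbr_of_p {V : Type*} {G : SimpleGraph V} {I : Set V} {u : Unit}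
    {b : V ⊕ (G.edgeSet ⊕ Unit)} (h : (ptSkeleton G I).Adj (Sum.inr (Sum.inr u)) b) :
    ∃ v, b = Sum.inl v ∧ v ∈ I := by
  rw [ptSkeleton, SimpleGraph.fromRel_adj] at h
  rcases b with v' | e' | u' <;> simp_all

theorem stmt_6 {V : Type*} [Fintype V] (G : SimpleGraph V) (I : Set V) :
    (ptSkeleton G I).IsAcyclic ↔ ∀ u ∈ I, ∀ v ∈ I, ¬ G.Adj u v := by
  constructor
  · intro hac u hu v hv hadj
    have he : s(u, v) ∈ G.edgeSet := hadj
    set E : G.edgeSet := ⟨s(u, v), he⟩ with hE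
    set P : V ⊕ (G.edgeSet ⊕ Unit) := Sum.inr (Sum.inr ()) with hP
    have h1 : (ptSkeleton G I).Adj P (Sum.inl u) := by
      rw [ptSkeleton, SimpleGraph.fromRel_adj]; simp [hP, hu]
    have h2 : (ptSkeleton G I).Adj (Sum.inl u) (Sum.inr (Sum.inl E)) := by
      rw [ptSkeleton, SimpleGraph.fromRel_adj]; simp [hE, hu]
    have h3 : (ptSkeleton G I).Adj (Sum.inr (Sum.inl E)) (Sum.inl v) := by
      rw [ptSkeleton, SimpleGraph.fromRel_adj]; simp [hE, hv]
    have h4 : (ptSkeleton G I).Adj (Sum.inl v) P := by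
      rw [ptSkeleton, SimpleGraph.fromRel_adj]; simp [hP, hv]
    have hc : (SimpleGraph.Walk.cons h1 (SimpleGraph.Walk.cons h2
        (SimpleGraph.Walk.cons h3 (SimpleGraph.Walk.cons h4 SimpleGraph.Walk.nil)))).IsCycle := by
      rw [SimpleGraph.Walk.isCycle_def]
      refine ⟨?_, by simp, ?_⟩
      · rw [SimpleGraph.Walk.isTrail_def]
        simp [hP, hE, Sym2.eq_iff, hadj.ne]
      · simp [hP, hE, hadj.ne]
    exact hac _ hc
  · intro hind x c hc
    haveI : DecidableEq (V ⊕ (G.edgeSet ⊕ Unit)) := Classical.decEq _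
    -- first, find an inl-vertex in the support
    have key : ∀ (w : V) (c' : (ptSkeleton G I).Walk (Sum.inl w) (Sum.inl w)),
        c'.IsCycle → False := by
      intro w c' hc'
      obtain ⟨b, t, hb, ht, hab, hat, hbt⟩ := exists_two_nbrs hc'
      obtain ⟨hwI, hb'⟩ := nbr_of_inl hab
      obtain ⟨-, ht'⟩ := nbr_of_inl hat
      -- at least one of b, t is an edge node
      have : ∃ (e : G.edgeSet) (hmem : Sum.inr (Sum.inl e) ∈ c'.support), True := by
        rcases hb' with rfl | ⟨e, rfl, _⟩
        · rcases ht' with rfl | ⟨e, rfl, _⟩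
          · exact absurd rfl hbt
          · exact ⟨e, ht, trivial⟩
        · exact ⟨e, hb, trivial⟩
      obtain ⟨e, hmem, -⟩ := this
      have hc'' := hc'.rotate hmem
      obtain ⟨b', t', -, -, hab', hat', hbt'⟩ := exists_two_nbrs hc''
      obtain ⟨v₁, rfl, hv₁I, hv₁e⟩ := nbr_of_edge hab'
      obtain ⟨v₂, rfl, hv₂I, hv₂e⟩ := nbr_of_edge hat'
      have hne : v₁ ≠ v₂ := fun h => hbt' (by rw [h])
      have : (e : Sym2 V) = s(v₁, v₂) := (Sym2.mem_and_mem_iff hne).mp ⟨hv₁e, hv₂e⟩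
      have hadj : G.Adj v₁ v₂ := by
        have hp := e.prop
        rw [this] at hp
        exact hp
      exact hind v₁ hv₁I v₂ hv₂I hadj
    rcases x with v | e | u
    · exact key v c hc
    · obtain ⟨b, t, hb, -, hab, -, -⟩ := exists_two_nbrs hc
      obtain ⟨v, rfl, -, -⟩ := nbr_of_edge hab
      exact key v _ (hc.rotate hb)
    · obtain ⟨b, t, hb, -, hab, -, -⟩ := exists_two_nbrs hc
      obtain ⟨v, rfl, -⟩ := nbr_of_p hab
      exact key v _ (hc.rotate hb)
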